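/- If (β ≡ 1, q = g) is an equilibrium with GenAI available under some revenue-threshold compensation scheme (v̄, w) with v̄, w ≥ 0, then (1−γ)·∫_X r(x)^α g(x)dx + c ≥ (1−γ)·sup_{x∈X} r(x)^α, where r(x) := p(x)/g(x). -/

import Mathlib

open MeasureTheory Real Set Filter Topology
open scoped ENNReal

noncomputable section

namespace GenAIPlatform

/-- `D(X)`: upper-semicontinuous densities on `X` with a positive lower bound. -/
def DSet {d : ℕ} (X : Set (Fin d → ℝ)) : Set ((Fin d → ℝ) → ℝ) :=
  {q | UpperSemicontinuousOn q X ∧ ∃ ε : ℝ, 0 < ε ∧ ∀ x ∈ X, ε ≤ q x}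

/-- `P(X)`: probability densities on `X`. -/
def PSet {d : ℕ} (X : Set (Fin d → ℝ)) : Set ((Fin d → ℝ) → ℝ) :=
  {q | q ∈ DSet X ∧ ∫ x in X, q x = 1}

/-- The revenue `V(y;q)` of content `y` under content density `q`. -/
def Rev {d : ℕ} (p : (Fin d → ℝ) → ℝ) (α γ : ℝ) (q : (Fin d → ℝ) → ℝ)
    (y : Fin d → ℝ) : ℝ :=
  (1 - γ) * (p y / q y) ^ α

/-- A compensation scheme `W(x;q)`. -/
abbrev Scheme (d : ℕ) := (Fin d → ℝ) → ((Fin d → ℝ) → ℝ) → ℝ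

/-- Compensated revenue `V^W(y;q)`. -/
def RevW {d : ℕ} (p : (Fin d → ℝ) → ℝ) (α γ : ℝ) (W : Scheme d)
    (q : (Fin d → ℝ) → ℝ) (y : Fin d → ℝ) : ℝ :=
  Rev p α γ q y + W y q

/-- Profit from manual creation `U^W(x;q)`. -/
def UtilW {d : ℕ} (p : (Fin d → ℝ) → ℝ) (α γ c : ℝ) (W : Scheme d)
    (q : (Fin d → ℝ) → ℝ) (x : Fin d → ℝ) : ℝ :=
  RevW p α γ W q x - c

/-- Expected compensated revenue from GenAI `V^W(g;q)`. -/
def RevWg {d : ℕ} (X : Set (Fin d → ℝ)) (p g : (Fin d → ℝ) → ℝ) (α γ : ℝ)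
    (W : Scheme d) (q : (Fin d → ℝ) → ℝ) : ℝ :=
  ∫ y in X, RevW p α γ W q y * g y

/-- The revenue-threshold compensation scheme `(v, w)`. -/
def Wthr {d : ℕ} (p : (Fin d → ℝ) → ℝ) (α γ v w : ℝ) : Scheme d :=
  fun x q => if v ≤ Rev p α γ q x then w else 0

/-- Platform profit `Π^W(q)` (per consumer). -/
def Profit {d : ℕ} (X : Set (Fin d → ℝ)) (p : (Fin d → ℝ) → ℝ) (α γ : ℝ)
    (W : Scheme d) (q : (Fin d → ℝ) → ℝ) : ℝ :=
  γ * ∫ x in X, p x ^ α * q x ^ (1 - α) - ∫ x in X, W x q * q x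

/-- Mean-field equilibrium with GenAI available: `β` is the GenAI-usage propensity,
`q` the content density. -/
def IsEquilibrium {d : ℕ} (X : Set (Fin d → ℝ)) (p g : (Fin d → ℝ) → ℝ)
    (α γ c : ℝ) (W : Scheme d) (β q : (Fin d → ℝ) → ℝ) : Prop :=
  (∀ x ∈ X, β x ∈ Icc (0 : ℝ) 1) ∧ q ∈ DSet X ∧
  (∀ x ∈ X, RevWg X p g α γ W q < UtilW p α γ c W q x → β x = 0) ∧
  (∀ x ∈ X, UtilW p α γ c W q x < RevWg X p g α γ W q → β x = 1) ∧
  (∀ x ∈ X, q x = (1 - β x) * p x + g x * ∫ y in X, β y * p y)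

/-- An upper semicontinuous function on a compact set is bounded above. -/
lemma usc_bddAbove {d : ℕ} {X : Set (Fin d → ℝ)} (hXc : IsCompact X)
    {f : (Fin d → ℝ) → ℝ} (hf : UpperSemicontinuousOn f X) :
    ∃ M : ℝ, ∀ x ∈ X, f x ≤ M := by
  refine hXc.induction_on (p := fun t => ∃ M : ℝ, ∀ x ∈ t, f x ≤ M) ⟨0, by simp⟩ ?_ ?_ ?_
  · rintro s t hst ⟨M, hM⟩; exact ⟨M, fun x hx => hM x (hst hx)⟩
  · rintro s t ⟨M, hM⟩ ⟨N, hN⟩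
    exact ⟨max M N, fun x hx => hx.elim (fun h => (hM x h).trans (le_max_left _ _))
      (fun h => (hN x h).trans (le_max_right _ _))⟩
  · intro x hx
    exact ⟨{z | f z < f x + 1}, hf x hx (f x + 1) (lt_add_one _),
      ⟨f x + 1, fun z hz => le_of_lt hz⟩⟩

/-- Proposition 3, converse direction. -/
theorem stmt17 {d : ℕ} (hd : 1 ≤ d) (X : Set (Fin d → ℝ))
    (hXc : IsCompact X) (hX0 : 0 < volume X)
    (p g : (Fin d → ℝ) → ℝ) (hp : p ∈ PSet X) (hg : g ∈ PSet X)
    (α γ c : ℝ) (hα : α ∈ Ioo (0 : ℝ) 1) (hγ : γ ∈ Icc (0 : ℝ) 1) (hc : 0 < c)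
    (v w : ℝ) (hv : 0 ≤ v) (hw : 0 ≤ w)
    (heq : IsEquilibrium X p g α γ c (Wthr p α γ v w) (fun _ => 1) g) :
    (1 - γ) * sSup ((fun x => (p x / g x) ^ α) '' X) ≤
      (1 - γ) * (∫ x in X, (p x / g x) ^ α * g x) + c := by
  obtain ⟨⟨hpusc, εp, hεp, hεpX⟩, hpint1⟩ := hp
  obtain ⟨⟨hgusc, εg, hεg, hεgX⟩, hgint1⟩ := hg
  have hXm : MeasurableSet X := hXc.measurableSet
  have hγ0 : (0:ℝ) ≤ 1 - γ := by linarith [hγ.2]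
  have hα0 : (0:ℝ) ≤ α := hα.1.le
  set W : Scheme d := Wthr p α γ v w with hW
  -- integrabilities of p and g from their integrals being 1 ≠ 0
  have hgint : IntegrableOn g X volume := by
    by_contra h
    rw [MeasureTheory.integral_undef h] at hgint1
    exact one_ne_zero hgint1.symm
  have hpint : IntegrableOn p X volume := by
    by_contra h
    rw [MeasureTheory.integral_undef h] at hpint1
    exact one_ne_zero hpint1.symm
  -- upper bound of p on X
  obtain ⟨M, hM⟩ := usc_bddAbove hXc hpusc
  -- the key integral
  set I : ℝ := ∫ x in X, (p x / g x) ^ α * g x with hI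
  have hI0 : 0 ≤ I := by
    refine MeasureTheory.setIntegral_nonneg hXm fun x hx => ?_
    have := hεpX x hx; have := hεgX x hx
    have h1 : 0 ≤ p x / g x := div_nonneg (by linarith) (by linarith)
    exact mul_nonneg (Real.rpow_nonneg h1 _) (by linarith)
  -- integrability of (p/g)^α * g on X
  have hfmeas : AEStronglyMeasurable (fun x => (p x / g x) ^ α * g x)
      (volume.restrict X) := by
    have h1 : AEMeasurable (fun x => p x / g x) (volume.restrict X) :=
      hpint.aemeasurable.div hgint.aemeasurable
    exact ((h1.pow aemeasurable_const).mul hgint.aemeasurable).aestronglyMeasurable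
  have hfint : IntegrableOn (fun x => (p x / g x) ^ α * g x) X volume := by
    refine MeasureTheory.Integrable.mono' (hgint.const_mul ((M / εg) ^ α)) hfmeas ?_
    rw [MeasureTheory.ae_restrict_iff' hXm]
    filter_upwards with x hx
    have hpx := hεpX x hx; have hgx := hεgX x hx
    have h1 : 0 ≤ p x / g x := div_nonneg (by linarith) (by linarith)
    have h2 : p x / g x ≤ M / εg :=
      div_le_div₀ (le_trans (by linarith) (hM x hx)) (hM x hx) hεg hgx
    have h3 : (p x / g x) ^ α ≤ (M / εg) ^ α := Real.rpow_le_rpow h1 h2 hα0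
    rw [Real.norm_eq_abs, abs_of_nonneg (mul_nonneg (Real.rpow_nonneg h1 _) (by linarith))]
    exact mul_le_mul_of_nonneg_right h3 (by linarith)
  -- rewrite Rev * g
  have hRevg : (fun y => Rev p α γ g y * g y)
      = fun y => (1 - γ) * ((p y / g y) ^ α * g y) := by
    funext y; simp only [Rev]; ring
  have hRevgint : IntegrableOn (fun y => Rev p α γ g y * g y) X volume := by
    rw [hRevg]; exact hfint.const_mul _
  have hRevgI : (∫ y in X, Rev p α γ g y * g y) = (1 - γ) * I := by
    rw [hRevg, MeasureTheory.integral_const_mul]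
  -- the equilibrium inequality
  have hU : ∀ x ∈ X, UtilW p α γ c W g x ≤ RevWg X p g α γ W g := by
    intro x hx
    by_contra h
    exact one_ne_zero (heq.2.2.1 x hx (not_le.1 h))
  -- W is nonneg and ≤ w
  have hW0 : ∀ x, 0 ≤ W x g := by
    intro x; simp only [hW, Wthr]; split_ifs <;> [exact hw; exact le_refl 0]
  have hWw : ∀ x, W x g ≤ w := by
    intro x; simp only [hW, Wthr]; split_ifs <;> [exact le_refl w; exact hw]
  -- key pointwise bound
  have hkey : ∀ x ∈ X, (1 - γ) * (p x / g x) ^ α ≤ (1 - γ) * I + c := by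
    have hUtil : ∀ x, UtilW p α γ c W g x
        = (1 - γ) * (p x / g x) ^ α + W x g - c := by
      intro x; simp only [UtilW, RevW, Rev]
    by_cases hA : ∃ y ∈ X, v ≤ Rev p α γ g y
    · by_cases hint : IntegrableOn (fun y => RevW p α γ W g y * g y) X volume
      · -- RevWg ≤ (1-γ)*I + w
        have hbound : RevWg X p g α γ W g ≤ (1 - γ) * I + w := by
          have hmono : (∫ y in X, RevW p α γ W g y * g y)
              ≤ ∫ y in X, (Rev p α γ g y * g y + w * g y) := by
            refine MeasureTheory.setIntegral_mono_on hint
              (hRevgint.add (hgint.const_mul w)) hXm fun y hy => ?_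
            have hgy : 0 ≤ g y := le_trans hεg.le (hεgX y hy)
            have : RevW p α γ W g y * g y = Rev p α γ g y * g y + W y g * g y := by
              simp only [RevW]; ring
            rw [this]
            exact add_le_add_right (mul_le_mul_of_nonneg_right (hWw y) hgy) _
          have hsplit : (∫ y in X, (Rev p α γ g y * g y + w * g y))
              = (1 - γ) * I + w := by
            rw [MeasureTheory.integral_add hRevgint (hgint.const_mul w), hRevgI,
              MeasureTheory.integral_const_mul, hgint1, mul_one]
          calc RevWg X p g α γ W g = ∫ y in X, RevW p α γ W g y * g y := rfl
            _ ≤ _ := hmono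
            _ = _ := hsplit
        have hgood : ∀ z ∈ X, v ≤ Rev p α γ g z →
            (1 - γ) * (p z / g z) ^ α ≤ (1 - γ) * I + c := by
          intro z hz hvz
          have h1 := hU z hz
          rw [hUtil] at h1
          have h2 : W z g = w := by
            simp only [hW, Wthr, if_pos hvz]
          rw [h2] at h1
          linarith [hbound]
        intro x hx
        by_cases hvx : v ≤ Rev p α γ g x
        · exact hgood x hx hvx
        · obtain ⟨y, hy, hvy⟩ := hA
          have h1 : (1 - γ) * (p x / g x) ^ α < v := by
            simpa only [Rev] using not_le.1 hvx
          have h2 : v ≤ (1 - γ) * (p y / g y) ^ α := by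
            simpa only [Rev] using hvy
          linarith [hgood y hy hvy]
      · -- not integrable: RevWg = 0
        have h0 : RevWg X p g α γ W g = 0 := MeasureTheory.integral_undef hint
        intro x hx
        have h1 := hU x hx
        rw [hUtil, h0] at h1
        have := hW0 x
        nlinarith [mul_nonneg hγ0 hI0]
    · -- no point meets the threshold: W ≡ 0 on X
      push_neg at hA
      have h0 : RevWg X p g α γ W g = (1 - γ) * I := by
        have : (∫ y in X, RevW p α γ W g y * g y)
            = ∫ y in X, Rev p α γ g y * g y := by
          refine MeasureTheory.setIntegral_congr_fun hXm fun y hy => ?_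
          simp only [RevW, hW, Wthr, if_neg (not_le.2 (hA y hy)), add_zero]
        calc RevWg X p g α γ W g = ∫ y in X, RevW p α γ W g y * g y := rfl
          _ = _ := this
          _ = _ := hRevgI
      intro x hx
      have h1 := hU x hx
      rw [hUtil, h0] at h1
      have := hW0 x
      linarith
  -- conclude via sSup
  rcases eq_or_lt_of_le hγ0 with hγe | hγp
  · rw [← hγe]
    simp only [zero_mul, zero_add]
    linarith
  · have hBn : 0 ≤ ((1 - γ) * I + c) / (1 - γ) :=
      div_nonneg (by nlinarith) hγ0
    have hsup : sSup ((fun x => (p x / g x) ^ α) '' X)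
        ≤ ((1 - γ) * I + c) / (1 - γ) := by
      refine Real.sSup_le ?_ hBn
      rintro a ⟨x, hx, rfl⟩
      rw [le_div_iff₀ hγp, mul_comm]
      exact hkey x hx
    calc (1 - γ) * sSup ((fun x => (p x / g x) ^ α) '' X)
        ≤ (1 - γ) * (((1 - γ) * I + c) / (1 - γ)) :=
          mul_le_mul_of_nonneg_left hsup hγ0
      _ = (1 - γ) * I + c := by field_simp

end GenAIPlatform
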